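/- Suppose B and C are √q_n-crystals. Then the √gl_n-crystal B ⊗ C, equipped additionally with the operators e'_1̄(b ⊗ c) = b ⊗ e'_1̄(c) if wt(b)_1 = wt(b)_2 = 0 and e'_1̄(b) ⊗ c otherwise, and f'_1̄(b ⊗ c) = b ⊗ f'_1̄(c) if wt(b)_1 = wt(b)_2 = 0 and f'_1̄(b) ⊗ c otherwise (with b ⊗ 0 = 0 ⊗ c = 0), is a √q_n-crystal. -/

import Mathlib

open scoped Classical

/-! ## Shifted diagrams, hook words, decomposition tableaux -/

/-- A strict partition, given as its (strictly decreasing) list of positive parts. -/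
def IsStrictPartition (lam : List ℕ) : Prop :=
  lam.Chain' (· > ·) ∧ ∀ p ∈ lam, 0 < p

/-- A partition (weakly decreasing list of positive parts). -/
def IsPartition (lam : List ℕ) : Prop :=
  lam.Chain' (· ≥ ·) ∧ ∀ p ∈ lam, 0 < p

/-- `(i, j)` (1-indexed row `i`, column `j`) is a box of the shifted diagram `SD_lam`. -/
def InSD (lam : List ℕ) (i j : ℕ) : Prop :=
  1 ≤ i ∧ i ≤ lam.length ∧ i ≤ j ∧ j < i + lam.getD (i - 1) 0

/-- `(i, j)` is a box of the (unshifted) Young diagram of `lam`. -/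
def InYD (lam : List ℕ) (i j : ℕ) : Prop :=
  1 ≤ i ∧ i ≤ lam.length ∧ 1 ≤ j ∧ j ≤ lam.getD (i - 1) 0

/-- The word given by row `i` (1-indexed) of a shifted tableau `T`, read left to right. -/
def rowWord (lam : List ℕ) (T : ℕ × ℕ → ℕ) (i : ℕ) : List ℕ :=
  (List.range (lam.getD (i - 1) 0)).map fun j => T (i, i + j)

/-- A hook word: a sequence of positive integers `w₁ ≥ ⋯ ≥ w_m < w_{m+1} < ⋯ < w_n`
for some `m ∈ [n]`. -/
def IsHookWord (w : List ℕ) : Prop :=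
  (∀ v ∈ w, 0 < v) ∧
  ∃ m, 1 ≤ m ∧ m ≤ w.length ∧
    (∀ j : ℕ, j + 1 < m → w.getD (j + 1) 0 ≤ w.getD j 0) ∧
    (∀ j : ℕ, m ≤ j + 1 → j + 1 < w.length → w.getD j 0 < w.getD (j + 1) 0)

/-- `r` is a hook subword of maximal length in `s`. -/
def IsMaxHookSubwordIn (r s : List ℕ) : Prop :=
  r.Sublist s ∧ IsHookWord r ∧
    ∀ t : List ℕ, t.Sublist s → IsHookWord t → t.length ≤ r.length

/-- A (semistandard) decomposition tableau of shifted shape `lam`. -/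
def IsDecompTab (lam : List ℕ) (T : ℕ × ℕ → ℕ) : Prop :=
  (∀ i, 1 ≤ i → i ≤ lam.length → IsHookWord (rowWord lam T i)) ∧
  (∀ i, 1 ≤ i → i + 1 ≤ lam.length →
    IsMaxHookSubwordIn (rowWord lam T i) (rowWord lam T (i + 1) ++ rowWord lam T i))

/-! ## Set-valued decomposition tableaux -/

/-- A set-valued decomposition tableau: boxes of `SD_lam` are filled by finite nonempty
sets of positive integers, all of whose distributions are decomposition tableaux. -/
def IsSetDecompTab (lam : List ℕ) (T : ℕ × ℕ → Finset ℕ) : Prop :=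
  (∀ i j, InSD lam i j → (T (i, j)).Nonempty ∧ 0 ∉ T (i, j)) ∧
  (∀ d : ℕ × ℕ → ℕ, (∀ i j, InSD lam i j → d (i, j) ∈ T (i, j)) → IsDecompTab lam d)

/-- Set-valued decomposition tableau whose every entry is contained in `{1, …, n}`. -/
def IsSetDecompTabN (n : ℕ) (lam : List ℕ) (T : ℕ × ℕ → Finset ℕ) : Prop :=
  IsSetDecompTab lam T ∧ ∀ i j, InSD lam i j → ∀ v ∈ T (i, j), v ≤ n

/-! ## Reverse row reading words -/

/-- The boxes of `SD_lam` in reverse row reading order: the first row read right to left,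
then the second row right to left, and so on. -/
def revrowBoxes (lam : List ℕ) : List (ℕ × ℕ) :=
  (List.range lam.length).flatMap fun r =>
    (List.range (lam.getD r 0)).reverse.map fun j => (r + 1, r + 1 + j)

/-- Position of a box in the reverse row reading order. -/
def boxIdx (lam : List ℕ) (b : ℕ × ℕ) : ℕ := (revrowBoxes lam).idxOf b

/-- The reverse row reading word of a set-valued tableau, with each letter labelled by
its box: entries within each box are listed in decreasing order. -/
def revrowEntries (lam : List ℕ) (T : ℕ × ℕ → Finset ℕ) : List ((ℕ × ℕ) × ℕ) :=
  (revrowBoxes lam).flatMap fun b => (((T b).sort (· ≤ ·)).reverse).map fun v => (b, v)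

/-- The reverse row reading word of a set-valued tableau. -/
def revrowWord (lam : List ℕ) (T : ℕ × ℕ → Finset ℕ) : List ℕ :=
  (revrowEntries lam T).map Prod.snd

/-- `wtSet lam T k` is the number of boxes of `T` whose entry contains `k`. -/
noncomputable def wtSet (lam : List ℕ) (T : ℕ × ℕ → Finset ℕ) (k : ℕ) : ℕ :=
  ((revrowBoxes lam).filter fun b => decide (k ∈ T b)).length

/-- `wtNum lam T k` is the number of boxes of an ordinary tableau `T` equal to `k`. -/
noncomputable def wtNum (lam : List ℕ) (T : ℕ × ℕ → ℕ) (k : ℕ) : ℕ :=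
  ((revrowBoxes lam).filter fun b => decide (T b = k)).length

/-! ## Parenthesis pairing: `i`-unpaired letters -/

/-- Number of unmatched `i+1`'s ( "(" ) after scanning `u` left to right,
where each `i` ( ")" ) cancels the most recent unmatched `i+1`. -/
def openCount (i : ℕ) (u : List ℕ) : ℕ :=
  u.foldl (fun acc a => if a = i + 1 then acc + 1 else if a = i then acc - 1 else acc) 0

/-- Number of unmatched `i`'s ( ")" ) after scanning `u` right to left,
where each `i+1` ( "(" ) cancels the nearest unmatched `i` to its right. -/
def closeCount (i : ℕ) (u : List ℕ) : ℕ :=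
  u.foldr (fun a acc => if a = i then acc + 1 else if a = i + 1 then acc - 1 else acc) 0

/-- Position `p` of `w` holds an `i`-unpaired letter equal to `i+1`. -/
def UnpairedHigh (i : ℕ) (w : List ℕ) (p : ℕ) : Prop :=
  p < w.length ∧ w.getD p 0 = i + 1 ∧ closeCount i (w.drop (p + 1)) = 0

/-- Position `p` of `w` holds an `i`-unpaired letter equal to `i`. -/
def UnpairedLow (i : ℕ) (w : List ℕ) (p : ℕ) : Prop :=
  p < w.length ∧ w.getD p 0 = i ∧ openCount i (w.take p) = 0

instance (i : ℕ) (w : List ℕ) (p : ℕ) : Decidable (UnpairedHigh i w p) := by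
  unfold UnpairedHigh; infer_instance

instance (i : ℕ) (w : List ℕ) (p : ℕ) : Decidable (UnpairedLow i w p) := by
  unfold UnpairedLow; infer_instance

/-- The number of `i`-unpaired letters equal to `i+1` in `w`. -/
def numUnpairedHigh (i : ℕ) (w : List ℕ) : ℕ :=
  ((List.range w.length).filter fun p => decide (UnpairedHigh i w p)).length

/-- The number of `i`-unpaired letters equal to `i` in `w`. -/
def numUnpairedLow (i : ℕ) (w : List ℕ) : ℕ :=
  ((List.range w.length).filter fun p => decide (UnpairedLow i w p)).length

/-! ## Iterated partial operators and string lengths -/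

/-- Iterate a partial operator, with the convention that `0` (i.e. `none`) is absorbing. -/
def iterOpt {α : Type*} (g : α → Option α) : ℕ → α → Option α
  | 0, a => some a
  | k + 1, a => (g a).bind (iterOpt g k)

/-- `m` is the exact string length `sup {k | g^k a ≠ 0}` of `a` under `g`. -/
def HasStringLen {α : Type*} (g : α → Option α) (a : α) (m : ℕ) : Prop :=
  iterOpt g m a ≠ none ∧ iterOpt g (m + 1) a = none

/-! ## The queer crystal operators on set-valued decomposition tableaux -/

/-- The raising crystal operator `e_i` on set-valued decomposition tableaux. -/
noncomputable def eCrystal (lam : List ℕ) (i : ℕ) (T : ℕ × ℕ → Finset ℕ) :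
    Option (ℕ × ℕ → Finset ℕ) :=
  if h : ∃ p, UnpairedHigh i (revrowWord lam T) p then
    let xy := ((revrowEntries lam T).getD (Nat.find h) ((0, 0), 0)).1
    let T1 := Function.update T xy (insert i ((T xy).erase (i + 1)))
    if IsSetDecompTab lam T1 then some T1
    else if _hab : ∃ m, m < boxIdx lam xy ∧ i ∈ T ((revrowBoxes lam).getD m (0, 0)) ∧
        i + 1 ∈ T ((revrowBoxes lam).getD m (0, 0)) then
      let m := Nat.findGreatest (fun m => m < boxIdx lam xy ∧
          i ∈ T ((revrowBoxes lam).getD m (0, 0)) ∧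
          i + 1 ∈ T ((revrowBoxes lam).getD m (0, 0))) (boxIdx lam xy)
      let ab := (revrowBoxes lam).getD m (0, 0)
      some (Function.update (Function.update T ab ((T ab).erase (i + 1))) xy
        (insert i (T xy)))
    else none
  else none

/-- The lowering crystal operator `f_i` on set-valued decomposition tableaux. -/
noncomputable def fCrystal (lam : List ℕ) (i : ℕ) (T : ℕ × ℕ → Finset ℕ) :
    Option (ℕ × ℕ → Finset ℕ) :=
  if _h : ∃ p, UnpairedLow i (revrowWord lam T) p then
    let p := Nat.findGreatest (fun p => UnpairedLow i (revrowWord lam T) p)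
      (revrowWord lam T).length
    let xy := ((revrowEntries lam T).getD p ((0, 0), 0)).1
    let T1 := Function.update T xy (insert (i + 1) ((T xy).erase i))
    if IsSetDecompTab lam T1 then some T1
    else if hab : ∃ m, boxIdx lam xy < m ∧ m < (revrowBoxes lam).length ∧
        i ∈ T ((revrowBoxes lam).getD m (0, 0)) ∧
        i + 1 ∈ T ((revrowBoxes lam).getD m (0, 0)) then
      let ab := (revrowBoxes lam).getD (Nat.find hab) (0, 0)
      some (Function.update (Function.update T ab ((T ab).erase i)) xy
        (insert (i + 1) (T xy)))
    else none
  else none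

/-- The queer raising operator `e_1̄` on set-valued decomposition tableaux. -/
noncomputable def eBarCrystal (lam : List ℕ) (T : ℕ × ℕ → Finset ℕ) :
    Option (ℕ × ℕ → Finset ℕ) :=
  if h : ∃ p, p < (revrowWord lam T).length ∧ (revrowWord lam T).getD p 0 = 2 ∧
      ∀ q < p, (revrowWord lam T).getD q 0 ≠ 1 then
    let xy := ((revrowEntries lam T).getD (Nat.find h) ((0, 0), 0)).1
    if 1 ∈ T xy then none
    else some (Function.update T xy (insert 1 ((T xy).erase 2)))
  else none

/-- The queer lowering operator `f_1̄` on set-valued decomposition tableaux. -/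
noncomputable def fBarCrystal (lam : List ℕ) (T : ℕ × ℕ → Finset ℕ) :
    Option (ℕ × ℕ → Finset ℕ) :=
  if h : ∃ p, p < (revrowWord lam T).length ∧ (revrowWord lam T).getD p 0 = 1 ∧
      ∀ q < p, (revrowWord lam T).getD q 0 ≠ 2 then
    let xy := ((revrowEntries lam T).getD (Nat.find h) ((0, 0), 0)).1
    some (Function.update T xy (insert 2 ((T xy).erase 1)))
  else none
/-! ## Multiset-valued decomposition tableaux -/

/-- A multiset-valued decomposition tableau in which only the entry `1` may repeat
within a box, all of whose distributions are decomposition tableaux. -/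
def IsMultisetDecompTab (lam : List ℕ) (T : ℕ × ℕ → Multiset ℕ) : Prop :=
  (∀ i j, InSD lam i j → T (i, j) ≠ 0 ∧ 0 ∉ T (i, j) ∧
      ∀ v : ℕ, v ≠ 1 → (T (i, j)).count v ≤ 1) ∧
  (∀ d : ℕ × ℕ → ℕ, (∀ i j, InSD lam i j → d (i, j) ∈ T (i, j)) → IsDecompTab lam d)

/-- Reverse row reading word of a multiset-valued tableau, with boxes recorded. -/
def revrowEntriesM (lam : List ℕ) (T : ℕ × ℕ → Multiset ℕ) : List ((ℕ × ℕ) × ℕ) :=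
  (revrowBoxes lam).flatMap fun b => (((T b).sort (· ≤ ·)).reverse).map fun v => (b, v)

/-- Reverse row reading word of a multiset-valued tableau. -/
def revrowWordM (lam : List ℕ) (T : ℕ × ℕ → Multiset ℕ) : List ℕ :=
  (revrowEntriesM lam T).map Prod.snd

/-- The operator `e*_1̄` on multiset-valued decomposition tableaux: if the first `2` of
the reverse row reading word occurs before every `1`, change it to a `1`. -/
noncomputable def eStarBar (lam : List ℕ) (T : ℕ × ℕ → Multiset ℕ) :
    Option (ℕ × ℕ → Multiset ℕ) :=
  if h : ∃ p, p < (revrowWordM lam T).length ∧ (revrowWordM lam T).getD p 0 = 2 ∧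
      ∀ q < p, (revrowWordM lam T).getD q 0 ≠ 1 then
    let b := ((revrowEntriesM lam T).getD (Nat.find h) ((0, 0), 0)).1
    some (Function.update T b (1 ::ₘ (T b).erase 2))
  else none

/-- The operator `f*_1̄` on multiset-valued decomposition tableaux: if the first `1` of
the reverse row reading word occurs before every `2`, change it to a `2`. -/
noncomputable def fStarBar (lam : List ℕ) (T : ℕ × ℕ → Multiset ℕ) :
    Option (ℕ × ℕ → Multiset ℕ) :=
  if h : ∃ p, p < (revrowWordM lam T).length ∧ (revrowWordM lam T).getD p 0 = 1 ∧
      ∀ q < p, (revrowWordM lam T).getD q 0 ≠ 2 then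
    let b := ((revrowEntriesM lam T).getD (Nat.find h) ((0, 0), 0)).1
    some (Function.update T b (2 ::ₘ (T b).erase 1))
  else none

/-! ## Linked `i`-words and square-root crystal operators -/

/-- Characters of a linked `i`-word: `(`, `)` and `-`. -/
inductive PChar : Type
  | op : PChar
  | cl : PChar
  | dash : PChar
  deriving DecidableEq

/-- The linked `i`-word of a set-valued tableau, with each character labelled by its box:
a box containing `i` but not `i+1` gives `)`, a box containing `i+1` but not `i` gives `(`,
and a box containing both gives `)-(`; boxes are read in reverse row reading order. -/
def tokens (lam : List ℕ) (i : ℕ) (T : ℕ × ℕ → Finset ℕ) : List (PChar × (ℕ × ℕ)) :=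
  (revrowBoxes lam).flatMap fun b =>
    if i ∈ T b ∧ i + 1 ∈ T b then [(PChar.cl, b), (PChar.dash, b), (PChar.op, b)]
    else if i ∈ T b then [(PChar.cl, b)]
    else if i + 1 ∈ T b then [(PChar.op, b)]
    else []

/-- Unmatched `(`s after scanning left to right (ignoring dashes). -/
def openCnt (u : List PChar) : ℕ :=
  u.foldl (fun acc a => match a with
    | PChar.op => acc + 1
    | PChar.cl => acc - 1
    | PChar.dash => acc) 0

/-- Unmatched `)`s after scanning right to left (ignoring dashes). -/
def closeCnt (u : List PChar) : ℕ :=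
  u.foldr (fun a acc => match a with
    | PChar.cl => acc + 1
    | PChar.op => acc - 1
    | PChar.dash => acc) 0

/-- Position `p` holds an unpaired `(`. -/
def UnpairedOp (ws : List PChar) (p : ℕ) : Prop :=
  p < ws.length ∧ ws.getD p PChar.dash = PChar.op ∧ closeCnt (ws.drop (p + 1)) = 0

/-- Position `p` holds an unpaired `)`. -/
def UnpairedCl (ws : List PChar) (p : ℕ) : Prop :=
  p < ws.length ∧ ws.getD p PChar.dash = PChar.cl ∧ openCnt (ws.take p) = 0

/-- A fully matched (balanced) parenthesis word, ignoring dashes. -/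
def BalancedP (u : List PChar) : Prop :=
  u.count PChar.op = u.count PChar.cl ∧
  ∀ k, (u.take k).count PChar.cl ≤ (u.take k).count PChar.op

/-- The `(` at position `a` is matched with the `)` at position `b`. -/
def MatchedPair (ws : List PChar) (a b : ℕ) : Prop :=
  a < b ∧ b < ws.length ∧ ws.getD a PChar.dash = PChar.op ∧
  ws.getD b PChar.dash = PChar.cl ∧ BalancedP ((ws.drop (a + 1)).take (b - (a + 1)))

/-- Generating relation for equivalence classes of characters: a matched pair together
with everything between them lies in one class, and so do the three characters `)-(`
coming from a single box. -/
def LinkRel (ws : List PChar) (p q : ℕ) : Prop :=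
  (∃ a b, MatchedPair ws a b ∧ a ≤ p ∧ p ≤ b ∧ a ≤ q ∧ q ≤ b) ∨
  (∃ d, 1 ≤ d ∧ d + 1 < ws.length ∧ ws.getD d PChar.op = PChar.dash ∧
    (p = d - 1 ∨ p = d ∨ p = d + 1) ∧ (q = d - 1 ∨ q = d ∨ q = d + 1))

/-- Two positions lie in the same equivalence class of the linked `i`-word. -/
def SameClass (ws : List PChar) : ℕ → ℕ → Prop := Relation.ReflTransGen (LinkRel ws)

/-- The class of position `p` contains an unpaired `(`. -/
def HasUnpairedOpIn (ws : List PChar) (p : ℕ) : Prop :=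
  ∃ q, SameClass ws p q ∧ UnpairedOp ws q

/-- The class of position `p` contains an unpaired `)`. -/
def HasUnpairedClIn (ws : List PChar) (p : ℕ) : Prop :=
  ∃ q, SameClass ws p q ∧ UnpairedCl ws q

/-- Position `p` belongs to a left form: a class with no unpaired `)` that ends
with an unpaired `(`. -/
def IsLeftFormAt (ws : List PChar) (p : ℕ) : Prop :=
  p < ws.length ∧ HasUnpairedOpIn ws p ∧ ¬ HasUnpairedClIn ws p

/-- Position `p` belongs to a right form: a class with no unpaired `(` that starts
with an unpaired `)`. -/
def IsRightFormAt (ws : List PChar) (p : ℕ) : Prop :=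
  p < ws.length ∧ HasUnpairedClIn ws p ∧ ¬ HasUnpairedOpIn ws p

/-- The square-root raising operator `e'_i` on set-valued decomposition tableaux. -/
noncomputable def eSqrt (lam : List ℕ) (i : ℕ) (T : ℕ × ℕ → Finset ℕ) :
    Option (ℕ × ℕ → Finset ℕ) :=
  let tk := tokens lam i T
  let ws := tk.map Prod.fst
  if hc : ∃ p, UnpairedOp ws p ∧ HasUnpairedClIn ws p then
    -- the `)-(` at the end of the combined form: remove `i+1` from its box
    let b := (tk.getD (Nat.find hc) (PChar.op, (0, 0))).2
    some (Function.update T b ((T b).erase (i + 1)))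
  else if hl : ∃ p, IsLeftFormAt ws p then
    -- the `(` at the start of the first left form: add `i` to its box
    let b := (tk.getD (Nat.find hl) (PChar.op, (0, 0))).2
    some (Function.update T b (insert i (T b)))
  else none

/-- The square-root lowering operator `f'_i` on set-valued decomposition tableaux. -/
noncomputable def fSqrt (lam : List ℕ) (i : ℕ) (T : ℕ × ℕ → Finset ℕ) :
    Option (ℕ × ℕ → Finset ℕ) :=
  let tk := tokens lam i T
  let ws := tk.map Prod.fst
  if hc : ∃ p, UnpairedCl ws p ∧ HasUnpairedOpIn ws p then
    -- the `)-(` at the beginning of the combined form: remove `i` from its box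
    let b := (tk.getD (Nat.find hc) (PChar.op, (0, 0))).2
    some (Function.update T b ((T b).erase i))
  else if _hr : ∃ p, IsRightFormAt ws p then
    -- the `)` at the end of the last right form: add `i+1` to its box
    let b := (tk.getD (Nat.findGreatest (fun p => IsRightFormAt ws p) ws.length)
        (PChar.op, (0, 0))).2
    some (Function.update T b (insert (i + 1) (T b)))
  else none

/-- The square-root queer raising operator `e'_1̄`. -/
noncomputable def eBarSqrt (lam : List ℕ) (T : ℕ × ℕ → Finset ℕ) :
    Option (ℕ × ℕ → Finset ℕ) :=
  if h : ∃ m, m < (revrowBoxes lam).length ∧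
      (1 ∈ T ((revrowBoxes lam).getD m (0, 0)) ∨ 2 ∈ T ((revrowBoxes lam).getD m (0, 0))) then
    let b := (revrowBoxes lam).getD (Nat.find h) (0, 0)
    if 1 ∈ T b then
      if 2 ∈ T b then some (Function.update T b ((T b).erase 2)) else none
    else some (Function.update T b (insert 1 (T b)))
  else none

/-- The square-root queer lowering operator `f'_1̄`. -/
noncomputable def fBarSqrt (lam : List ℕ) (T : ℕ × ℕ → Finset ℕ) :
    Option (ℕ × ℕ → Finset ℕ) :=
  if h : ∃ m, m < (revrowBoxes lam).length ∧
      (1 ∈ T ((revrowBoxes lam).getD m (0, 0)) ∨ 2 ∈ T ((revrowBoxes lam).getD m (0, 0))) then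
    let b := (revrowBoxes lam).getD (Nat.find h) (0, 0)
    if 2 ∈ T b then
      if 1 ∈ T b then some (Function.update T b ((T b).erase 1)) else none
    else some (Function.update T b (insert 2 (T b)))
  else none
/-! ## Abstract √gl_n- and √q_n-crystals -/

/-- The data of a crystal-like structure: a weight map (coordinates `1, …, n` are the
relevant ones) and partial raising/lowering operators indexed by `i ∈ [n-1]`. -/
structure SqGlData (B : Type*) where
  wt : B → ℕ → ℕ
  e : ℕ → B → Option B
  f : ℕ → B → Option B

/-- The axioms of a `√gl_n`-crystal. -/
def IsSqGlCrystal {B : Type*} (n : ℕ) (D : SqGlData B) : Prop :=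
  (∀ i, 1 ≤ i → i < n → ∀ b, ∃ ep ph : ℕ,
      HasStringLen (D.e i) b ep ∧ HasStringLen (D.f i) b ph ∧
      Even (ep + ph) ∧ (ph : ℤ) - ep = 2 * ((D.wt b i : ℤ) - D.wt b (i + 1))) ∧
  (∀ i, 1 ≤ i → i < n → ∀ b c, D.e i b = some c ↔ D.f i c = some b) ∧
  (∀ i, 1 ≤ i → i < n → ∀ b c, D.e i b = some c → ∀ ep, HasStringLen (D.e i) b ep →
      ∀ k, (D.wt c k : ℤ) - D.wt b k =
        if Even ep then (if k = i then 1 else 0) else (if k = i + 1 then -1 else 0))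

/-- The data of a queer crystal-like structure. -/
structure SqQData (B : Type*) extends SqGlData B where
  ebar : B → Option B
  fbar : B → Option B

/-- The axioms of a `√q_n`-crystal. -/
def IsSqQnCrystal {B : Type*} (n : ℕ) (D : SqQData B) : Prop :=
  IsSqGlCrystal n D.toSqGlData ∧
  (∀ i, 3 ≤ i → i < n → ∀ b,
      (D.e i b).bind D.ebar = (D.ebar b).bind (D.e i) ∧
      (D.f i b).bind D.ebar = (D.ebar b).bind (D.f i) ∧
      (D.e i b).bind D.fbar = (D.fbar b).bind (D.e i) ∧
      (D.f i b).bind D.fbar = (D.fbar b).bind (D.f i)) ∧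
  (∀ i, 3 ≤ i → i < n → ∀ b c, (D.ebar b = some c ∨ D.fbar b = some c) →
      (∀ m, HasStringLen (D.e i) b m ↔ HasStringLen (D.e i) c m) ∧
      (∀ m, HasStringLen (D.f i) b m ↔ HasStringLen (D.f i) c m)) ∧
  (∀ b, ∃ ep ph : ℕ, HasStringLen D.ebar b ep ∧ HasStringLen D.fbar b ph ∧
      ep + ph = (if D.wt b 1 = 0 ∧ D.wt b 2 = 0 then 0 else 2)) ∧
  (∀ b c, D.ebar b = some c ↔ D.fbar c = some b) ∧
  (∀ b c, D.ebar b = some c → ∀ ep, HasStringLen D.ebar b ep →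
      ∀ k, (D.wt c k : ℤ) - D.wt b k =
        if ep = 2 then (if k = 1 then 1 else 0) else (if k = 2 then -1 else 0))

/-- The square of a partial operator. -/
def sqOp {B : Type*} (g : B → Option B) : B → Option B := fun b => (g b).bind g

/-- The axioms of a (seminormal) `gl_n`-crystal for given weight map and operators. -/
def GlSeminormalAxioms {B : Type*} (n : ℕ) (wt : B → ℕ → ℕ)
    (E F : ℕ → B → Option B) : Prop :=
  (∀ i, 1 ≤ i → i < n → ∀ b c, E i b = some c ↔ F i c = some b) ∧
  (∀ i, 1 ≤ i → i < n → ∀ b c, E i b = some c →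
      ∀ k, (wt c k : ℤ) - wt b k = (if k = i then 1 else 0) - (if k = i + 1 then 1 else 0)) ∧
  (∀ i, 1 ≤ i → i < n → ∀ b, ∃ ep ph : ℕ,
      HasStringLen (E i) b ep ∧ HasStringLen (F i) b ph ∧
      (ph : ℤ) - ep = (wt b i : ℤ) - wt b (i + 1))

/-- The additional axioms making a `gl_n`-crystal into a `q_n`-crystal. -/
def QnExtraAxioms {B : Type*} (n : ℕ) (wt : B → ℕ → ℕ)
    (E F : ℕ → B → Option B) (Eb Fb : B → Option B) : Prop :=
  (∀ i, 3 ≤ i → i < n → ∀ b,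
      (E i b).bind Eb = (Eb b).bind (E i) ∧ (F i b).bind Eb = (Eb b).bind (F i) ∧
      (E i b).bind Fb = (Fb b).bind (E i) ∧ (F i b).bind Fb = (Fb b).bind (F i)) ∧
  (∀ i, 3 ≤ i → i < n → ∀ b c, (Eb b = some c ∨ Fb b = some c) →
      (∀ m, HasStringLen (E i) b m ↔ HasStringLen (E i) c m) ∧
      (∀ m, HasStringLen (F i) b m ↔ HasStringLen (F i) c m)) ∧
  (∀ b c, Eb b = some c ↔ Fb c = some b) ∧
  (∀ b c, Eb b = some c →
      ∀ k, (wt c k : ℤ) - wt b k = (if k = 1 then 1 else 0) - (if k = 2 then 1 else 0))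

/-- String length as a function (the supremum of the set of iterates that survive). -/
noncomputable def strLen {B : Type*} (g : B → Option B) (b : B) : ℕ :=
  sSup {k | iterOpt g k b ≠ none}

/-- Tensor product of `√gl_n`-crystal data. -/
noncomputable def tensorGl {B C : Type*} (DB : SqGlData B) (DC : SqGlData C) :
    SqGlData (B × C) where
  wt := fun bc k => DB.wt bc.1 k + DC.wt bc.2 k
  e := fun i bc =>
    if strLen (DB.e i) bc.1 ≤ strLen (DC.f i) bc.2 then
      (DC.e i bc.2).map fun c' => (bc.1, c')
    else (DB.e i bc.1).map fun b' => (b', bc.2)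
  f := fun i bc =>
    if strLen (DB.e i) bc.1 < strLen (DC.f i) bc.2 then
      (DC.f i bc.2).map fun c' => (bc.1, c')
    else (DB.f i bc.1).map fun b' => (b', bc.2)

/-- Tensor product of `√q_n`-crystal data. -/
noncomputable def tensorQ {B C : Type*} (DB : SqQData B) (DC : SqQData C) :
    SqQData (B × C) where
  toSqGlData := tensorGl DB.toSqGlData DC.toSqGlData
  ebar := fun bc =>
    if DB.wt bc.1 1 = 0 ∧ DB.wt bc.1 2 = 0 then (DC.ebar bc.2).map fun c' => (bc.1, c')
    else (DB.ebar bc.1).map fun b' => (b', bc.2)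
  fbar := fun bc =>
    if DB.wt bc.1 1 = 0 ∧ DB.wt bc.1 2 = 0 then (DC.fbar bc.2).map fun c' => (bc.1, c')
    else (DB.fbar bc.1).map fun b' => (b', bc.2)
/-! ## Generating functions -/

/-- A set-valued decomposition tableau, normalized to be empty off the shifted diagram. -/
def IsNormalizedSVDT (lam : List ℕ) (T : ℕ × ℕ → Finset ℕ) : Prop :=
  IsSetDecompTab lam T ∧ ∀ i j, ¬ InSD lam i j → T (i, j) = ∅

/-- A decomposition tableau, normalized to be `0` off the shifted diagram. -/
def IsNormalizedDT (lam : List ℕ) (T : ℕ × ℕ → ℕ) : Prop :=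
  IsDecompTab lam T ∧ ∀ i j, ¬ InSD lam i j → T (i, j) = 0

/-- `Σ_λ = ∑_{T ∈ SetDecTab(λ)} x^T` as a formal power series; variable `k` stands for
`x_{k+1}`, i.e. records occurrences of the letter `k+1`. -/
noncomputable def SigmaLam (lam : List ℕ) : MvPowerSeries ℕ ℤ :=
  fun d => (Set.ncard
    {T : ℕ × ℕ → Finset ℕ | IsNormalizedSVDT lam T ∧ ∀ k, wtSet lam T (k + 1) = d k} : ℤ)

/-- The Schur `P`-function `P_λ = ∑_{T ∈ DecTab(λ)} x^T` as a formal power series. -/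
noncomputable def SchurPfun (lam : List ℕ) : MvPowerSeries ℕ ℤ :=
  fun d => (Set.ncard
    {T : ℕ × ℕ → ℕ | IsNormalizedDT lam T ∧ ∀ k, wtNum lam T (k + 1) = d k} : ℤ)

/-! ## Marked (primed) shifted tableaux and `GP`-functions.
We encode the marked alphabet `1' < 1 < 2' < 2 < ⋯` into `ℕ` by `k' ↦ 2k - 1` and
`k ↦ 2k`, so primed letters are odd and the natural order is preserved. -/

/-- A semistandard marked shifted tableau (as a distribution): weakly increasing rows and
columns, no primed (odd) letter repeated in a row, no unprimed (even) letter repeated in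
a column. -/
def IsSemistandardMarked (lam : List ℕ) (d : ℕ × ℕ → ℕ) : Prop :=
  (∀ i j, InSD lam i j → InSD lam i (j + 1) → d (i, j) ≤ d (i, j + 1)) ∧
  (∀ i j, InSD lam i j → InSD lam (i + 1) j → d (i, j) ≤ d (i + 1, j)) ∧
  (∀ i j j', InSD lam i j → InSD lam i j' → j < j' → d (i, j) = d (i, j') →
    Even (d (i, j))) ∧
  (∀ i i' j, InSD lam i j → InSD lam i' j → i < i' → d (i, j) = d (i', j) →
    Odd (d (i, j)))

/-- A semistandard set-valued shifted tableau in the marked alphabet, with no primed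
letters on the main diagonal. -/
def IsSetSSMarkedShifted (lam : List ℕ) (T : ℕ × ℕ → Finset ℕ) : Prop :=
  (∀ i j, InSD lam i j → (T (i, j)).Nonempty ∧ ∀ v ∈ T (i, j), 1 ≤ v) ∧
  (∀ i, InSD lam i i → ∀ v ∈ T (i, i), Even v) ∧
  (∀ d : ℕ × ℕ → ℕ, (∀ i j, InSD lam i j → d (i, j) ∈ T (i, j)) →
    IsSemistandardMarked lam d)

/-- `wtMarked lam T k` is the total number of occurrences of `k` or `k'` in `T`. -/
noncomputable def wtMarked (lam : List ℕ) (T : ℕ × ℕ → Finset ℕ) (k : ℕ) : ℕ :=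
  ((revrowBoxes lam).map fun b =>
    ((T b).filter fun v => v = 2 * k - 1 ∨ v = 2 * k).card).sum

/-- The K-theoretic Schur `P`-function `GP_λ` as a formal power series; variable `k`
stands for `x_{k+1}`. -/
noncomputable def GPfun (lam : List ℕ) : MvPowerSeries ℕ ℤ :=
  fun d => (Set.ncard
    {T : ℕ × ℕ → Finset ℕ | IsSetSSMarkedShifted lam T ∧
      (∀ i j, ¬ InSD lam i j → T (i, j) = ∅) ∧
      ∀ k, wtMarked lam T (k + 1) = d k} : ℤ)

/-! ## Polynomial versions (variables `x_1, …, x_n`, i.e. `X 1, …, X n`) -/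

/-- The boxes of the (unshifted) Young diagram of `lam`, listed row by row. -/
def YDboxes (lam : List ℕ) : List (ℕ × ℕ) :=
  (List.range lam.length).flatMap fun r =>
    (List.range (lam.getD r 0)).map fun j => (r + 1, j + 1)

/-- A semistandard (unshifted) Young tableau: rows weakly increase, columns strictly
increase. -/
def IsSemistandardYT (lam : List ℕ) (d : ℕ × ℕ → ℕ) : Prop :=
  (∀ i j, InYD lam i j → InYD lam i (j + 1) → d (i, j) ≤ d (i, j + 1)) ∧
  (∀ i j, InYD lam i j → InYD lam (i + 1) j → d (i, j) < d (i + 1, j))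

/-- A semistandard set-valued (unshifted) tableau with entries in `{1, …, n}`,
normalized off the diagram. -/
def IsSetSSYT (n : ℕ) (lam : List ℕ) (T : ℕ × ℕ → Finset ℕ) : Prop :=
  (∀ i j, InYD lam i j → (T (i, j)).Nonempty ∧ ∀ v ∈ T (i, j), 1 ≤ v ∧ v ≤ n) ∧
  (∀ i j, ¬ InYD lam i j → T (i, j) = ∅) ∧
  (∀ d : ℕ × ℕ → ℕ, (∀ i j, InYD lam i j → d (i, j) ∈ T (i, j)) → IsSemistandardYT lam d)

/-- The symmetric Grothendieck polynomial `G_λ(x_1, …, x_n)`. -/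
noncomputable def Gpoly (n : ℕ) (lam : List ℕ) : MvPolynomial ℕ ℤ :=
  ∑ᶠ T ∈ {T : ℕ × ℕ → Finset ℕ | IsSetSSYT n lam T},
    ((YDboxes lam).map fun b =>
      ∏ v ∈ T b, (MvPolynomial.X v : MvPolynomial ℕ ℤ)).prod

/-- A semistandard set-valued marked shifted tableau with letters at most `n`,
normalized off the diagram. -/
def IsSetSSMarkedShiftedN (n : ℕ) (lam : List ℕ) (T : ℕ × ℕ → Finset ℕ) : Prop :=
  IsSetSSMarkedShifted lam T ∧ (∀ i j, ¬ InSD lam i j → T (i, j) = ∅) ∧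
  ∀ i j, InSD lam i j → ∀ v ∈ T (i, j), v ≤ 2 * n

/-- The K-theoretic Schur `P`-polynomial `GP_λ(x_1, …, x_n)`. -/
noncomputable def GPpoly (n : ℕ) (lam : List ℕ) : MvPolynomial ℕ ℤ :=
  ∑ᶠ T ∈ {T : ℕ × ℕ → Finset ℕ | IsSetSSMarkedShiftedN n lam T},
    ((revrowBoxes lam).map fun b =>
      ∏ v ∈ T b, (MvPolynomial.X ((v + 1) / 2) : MvPolynomial ℕ ℤ)).prod

/-- The character of the `m`-th tensor power of the standard `√q_n`-crystal, whose
elements are the nonempty subsets of `{1, …, n}` with weight the indicator vector. -/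
noncomputable def standardChar (n m : ℕ) : MvPolynomial ℕ ℤ :=
  ∑ b : Fin m → {S : Finset (Fin n) // S.Nonempty},
    ∏ j : Fin m, ∏ k ∈ (b j).1, (MvPolynomial.X ((k : ℕ) + 1) : MvPolynomial ℕ ℤ)

section StringLenLemmas

variable {α : Type*}

lemma iterOpt_succ' (g : α → Option α) (k : ℕ) (a : α) :
    iterOpt g (k + 1) a = (iterOpt g k a).bind g := by
  induction k generalizing a with
  | zero => cases h : g a <;> simp [iterOpt, h]
  | succ k ih =>
    show (g a).bind (iterOpt g (k+1)) = ((g a).bind (iterOpt g k)).bind g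
    cases h : g a with
    | none => rfl
    | some a' => simpa using ih a' 

lemma iterOpt_none_mono {g : α → Option α} {a : α} {k k' : ℕ}
    (h : iterOpt g k a = none) (hk : k ≤ k') : iterOpt g k' a = none := by
  induction hk with
  | refl => exact h
  | step _ ih => rw [iterOpt_succ', ih]; rfl

lemma hsl_zero_iff (g : α → Option α) (a : α) :
    HasStringLen g a 0 ↔ g a = none := by
  constructor
  · rintro ⟨-, h1⟩
    rw [show (0:ℕ)+1 = 1 from rfl, iterOpt_succ'] at h1
    simpa [iterOpt] using h1
  · intro h
    refine ⟨by simp [iterOpt], ?_⟩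
    rw [iterOpt_succ']
    simp [iterOpt, h]

lemma hsl_succ_iff (g : α → Option α) (a : α) (m : ℕ) :
    HasStringLen g a (m + 1) ↔ ∃ a', g a = some a' ∧ HasStringLen g a' m := by
  cases h : g a with
  | none =>
    simp only [HasStringLen]
    constructor
    · rintro ⟨h1, -⟩
      exact absurd (by simp [iterOpt, h]) h1
    · rintro ⟨a', ha', -⟩; simp [h] at ha'
  | some a' =>
    simp only [HasStringLen]
    have e1 : iterOpt g (m+1) a = iterOpt g m a' := by simp [iterOpt, h]
    have e2 : iterOpt g (m+2) a = iterOpt g (m+1) a' := by simp [iterOpt, h]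
    rw [e1, e2]
    constructor
    · rintro ⟨h1, h2⟩; exact ⟨a', rfl, h1, h2⟩
    · rintro ⟨a'', ha'', h1, h2⟩
      obtain rfl : a' = a'' := by simpa using ha''
      exact ⟨h1, h2⟩

lemma hsl_mem_iff {g : α → Option α} {a : α} {m : ℕ} (h : HasStringLen g a m) (k : ℕ) :
    iterOpt g k a ≠ none ↔ k ≤ m := by
  constructor
  · intro hk
    by_contra hle
    exact hk (iterOpt_none_mono h.2 (by omega))
  · intro hk
    intro hnone
    exact h.1 (iterOpt_none_mono hnone hk)

lemma hsl_unique {g : α → Option α} {a : α} {m m' : ℕ}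
    (h : HasStringLen g a m) (h' : HasStringLen g a m') : m = m' := by
  have h1 := (hsl_mem_iff h m').mpr
  have h2 := (hsl_mem_iff h' m).mpr
  have := (hsl_mem_iff h m').mp
  have := (hsl_mem_iff h' m).mp (h.1)
  have := (hsl_mem_iff h m').mp (h'.1)
  omega

lemma strLen_eq {g : α → Option α} {a : α} {m : ℕ} (h : HasStringLen g a m) :
    strLen g a = m := by
  have hset : {k | iterOpt g k a ≠ none} = Set.Iic m := by
    ext k; simpa [Set.mem_Iic] using hsl_mem_iff h k
  rw [strLen, hset, csSup_Iic]

lemma hsl_none_iff {g : α → Option α} {a : α} {m : ℕ} (h : HasStringLen g a m) :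
    g a = none ↔ m = 0 := by
  cases m with
  | zero => simp [(hsl_zero_iff g a).mp h]
  | succ m =>
    obtain ⟨a', ha', -⟩ := (hsl_succ_iff g a m).mp h
    simp [ha']

lemma hsl_step {g : α → Option α} {a a' : α} {m : ℕ} (hg : g a = some a')
    (h : HasStringLen g a (m + 1)) : HasStringLen g a' m := by
  obtain ⟨a'', ha'', h'⟩ := (hsl_succ_iff g a m).mp h
  rw [hg, Option.some_inj] at ha''; subst ha''; exact h'

lemma hsl_some {g : α → Option α} {a : α} {m : ℕ} (h : HasStringLen g a m) (hm : m ≠ 0) :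
    ∃ a', g a = some a' := by
  cases m with
  | zero => omega
  | succ m => obtain ⟨a', ha', -⟩ := (hsl_succ_iff g a m).mp h; exact ⟨a', ha'⟩

end StringLenLemmas

section TensorGlLemmas

variable {B C : Type*}

lemma tensorGl_e_def (DB : SqGlData B) (DC : SqGlData C) (i : ℕ) (bc : B × C) :
    (tensorGl DB DC).e i bc =
      if strLen (DB.e i) bc.1 ≤ strLen (DC.f i) bc.2 then
        (DC.e i bc.2).map (fun c' => (bc.1, c'))
      else (DB.e i bc.1).map (fun b' => (b', bc.2)) := rfl

lemma tensorGl_f_def (DB : SqGlData B) (DC : SqGlData C) (i : ℕ) (bc : B × C) :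
    (tensorGl DB DC).f i bc =
      if strLen (DB.e i) bc.1 < strLen (DC.f i) bc.2 then
        (DC.f i bc.2).map (fun c' => (bc.1, c'))
      else (DB.f i bc.1).map (fun b' => (b', bc.2)) := rfl

lemma tensorGl_wt_def (DB : SqGlData B) (DC : SqGlData C) (bc : B × C) (k : ℕ) :
    (tensorGl DB DC).wt bc k = DB.wt bc.1 k + DC.wt bc.2 k := rfl

lemma tensor_e_hsl (DB : SqGlData B) (DC : SqGlData C) (i : ℕ)
    (adjC : ∀ x y, DC.e i x = some y ↔ DC.f i y = some x) :
    ∀ (m : ℕ) (b : B) (c : C) (a x y : ℕ),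
      HasStringLen (DB.e i) b a → HasStringLen (DC.e i) c x →
      HasStringLen (DC.f i) c y → m = x + (a - y) →
      HasStringLen ((tensorGl DB DC).e i) (b, c) m := by
  intro m
  induction m using Nat.strong_induction_on with
  | _ m ih =>
  intro b c a x y ha hx hy hm
  by_cases hc : a ≤ y
  · have hcond : strLen (DB.e i) b ≤ strLen (DC.f i) c := by
      rw [strLen_eq ha, strLen_eq hy]; exact hc
    have hmx : m = x := by omega
    subst hmx
    cases hxx : m with
    | zero =>
      subst hxx
      rw [hsl_zero_iff, tensorGl_e_def]
      simp [hcond, (hsl_zero_iff _ _).mp hx]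
    | succ x' =>
      subst hxx
      obtain ⟨c', hec, hx'⟩ := (hsl_succ_iff _ _ _).mp hx
      have hfc' : DC.f i c' = some c := (adjC c c').mp hec
      have hy' : HasStringLen (DC.f i) c' (y + 1) := (hsl_succ_iff _ _ _).mpr ⟨c, hfc', hy⟩
      rw [hsl_succ_iff]
      refine ⟨(b, c'), ?_, ?_⟩
      · rw [tensorGl_e_def]; simp [hcond, hec]
      · exact ih x' (by omega) b c' a x' (y + 1) ha hx' hy' (by omega)
  · have hcond : ¬ strLen (DB.e i) b ≤ strLen (DC.f i) c := by
      rw [strLen_eq ha, strLen_eq hy]; omega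
    obtain ⟨a', rfl⟩ : ∃ a', a = a' + 1 := ⟨a - 1, by omega⟩
    obtain ⟨b', heb, ha'⟩ := (hsl_succ_iff _ _ _).mp ha
    have hm1 : m = (x + (a' - y)) + 1 := by omega
    subst hm1
    rw [hsl_succ_iff]
    refine ⟨(b', c), ?_, ?_⟩
    · rw [tensorGl_e_def]; simp [hcond, heb]
    · exact ih _ (by omega) b' c a' x y ha' hx hy rfl

lemma tensor_f_hsl (DB : SqGlData B) (DC : SqGlData C) (i : ℕ)
    (adjB : ∀ x y, DB.e i x = some y ↔ DB.f i y = some x) :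
    ∀ (m : ℕ) (b : B) (c : C) (a A y : ℕ),
      HasStringLen (DB.e i) b a → HasStringLen (DB.f i) b A →
      HasStringLen (DC.f i) c y → m = A + (y - a) →
      HasStringLen ((tensorGl DB DC).f i) (b, c) m := by
  intro m
  induction m using Nat.strong_induction_on with
  | _ m ih =>
  intro b c a A y ha hA hy hm
  by_cases hc : a < y
  · have hcond : strLen (DB.e i) b < strLen (DC.f i) c := by
      rw [strLen_eq ha, strLen_eq hy]; exact hc
    obtain ⟨y', rfl⟩ : ∃ y', y = y' + 1 := ⟨y - 1, by omega⟩
    obtain ⟨c', hfc, hy'⟩ := (hsl_succ_iff _ _ _).mp hy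
    have hm1 : m = (A + (y' - a)) + 1 := by omega
    subst hm1
    rw [hsl_succ_iff]
    refine ⟨(b, c'), ?_, ?_⟩
    · rw [tensorGl_f_def]; simp [hcond, hfc]
    · exact ih _ (by omega) b c' a A y' ha hA hy' rfl
  · have hcond : ¬ strLen (DB.e i) b < strLen (DC.f i) c := by
      rw [strLen_eq ha, strLen_eq hy]; omega
    have hmA : m = A := by omega
    subst hmA
    cases hAA : m with
    | zero =>
      subst hAA
      rw [hsl_zero_iff, tensorGl_f_def]
      simp [hcond, (hsl_zero_iff _ _).mp hA]
    | succ A' =>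
      subst hAA
      obtain ⟨b', hfb, hA'⟩ := (hsl_succ_iff _ _ _).mp hA
      have heb' : DB.e i b' = some b := (adjB b' b).mpr hfb
      have ha' : HasStringLen (DB.e i) b' (a + 1) := (hsl_succ_iff _ _ _).mpr ⟨b, heb', ha⟩
      rw [hsl_succ_iff]
      refine ⟨(b', c), ?_, ?_⟩
      · rw [tensorGl_f_def]; simp [hcond, hfb]
      · exact ih _ (by omega) b' c (a + 1) A' y ha' hA' hy (by omega)

end TensorGlLemmas

section TensorGlAdj

variable {B C : Type*}

lemma tensor_adj (DB : SqGlData B) (DC : SqGlData C) (i : ℕ)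
    (adjB : ∀ x y, DB.e i x = some y ↔ DB.f i y = some x)
    (adjC : ∀ x y, DC.e i x = some y ↔ DC.f i y = some x)
    (exB : ∀ b : B, ∃ ep ph, HasStringLen (DB.e i) b ep ∧ HasStringLen (DB.f i) b ph)
    (exC : ∀ c : C, ∃ ep ph, HasStringLen (DC.e i) c ep ∧ HasStringLen (DC.f i) c ph) :
    ∀ bc bc' : B × C,
      (tensorGl DB DC).e i bc = some bc' ↔ (tensorGl DB DC).f i bc' = some bc := by
  rintro ⟨b, c⟩ ⟨b', c'⟩
  constructor
  · intro h
    obtain ⟨a, A, ha, hA⟩ := exB b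
    obtain ⟨x, y, hx, hy⟩ := exC c
    rw [tensorGl_e_def, strLen_eq ha, strLen_eq hy] at h
    by_cases hc : a ≤ y
    · rw [if_pos hc] at h
      obtain ⟨c1, hec, heq⟩ := Option.map_eq_some_iff.mp h
      obtain ⟨rfl, rfl⟩ : b = b' ∧ c1 = c' := by simpa [Prod.ext_iff] using heq
      have hfc : DC.f i c1 = some c := (adjC c c1).mp hec
      have hy' : HasStringLen (DC.f i) c1 (y + 1) := (hsl_succ_iff _ _ _).mpr ⟨c, hfc, hy⟩
      rw [tensorGl_f_def, strLen_eq ha, strLen_eq hy', if_pos (by omega : a < y + 1)]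
      simp [hfc]
    · rw [if_neg hc] at h
      obtain ⟨b1, heb, heq⟩ := Option.map_eq_some_iff.mp h
      obtain ⟨rfl, rfl⟩ : b1 = b' ∧ c = c' := by simpa [Prod.ext_iff] using heq
      have hfb : DB.f i b1 = some b := (adjB b b1).mp heb
      have hane : a ≠ 0 := by
        intro h0; subst h0; rw [(hsl_zero_iff _ _).mp ha] at heb; exact Option.some_ne_none _ heb.symm
      have ha' : HasStringLen (DB.e i) b1 (a - 1) := by
        obtain ⟨a', rfl⟩ : ∃ a', a = a' + 1 := ⟨a - 1, by omega⟩
        simpa using hsl_step heb ha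
      rw [tensorGl_f_def, strLen_eq ha', strLen_eq hy, if_neg (by omega : ¬ a - 1 < y)]
      simp [hfb]
  · intro h
    obtain ⟨a', A', ha', hA'⟩ := exB b'
    obtain ⟨x', y', hx', hy'⟩ := exC c'
    rw [tensorGl_f_def, strLen_eq ha', strLen_eq hy'] at h
    by_cases hc : a' < y'
    · rw [if_pos hc] at h
      obtain ⟨c1, hfc, heq⟩ := Option.map_eq_some_iff.mp h
      obtain ⟨rfl, rfl⟩ : b' = b ∧ c1 = c := by simpa [Prod.ext_iff] using heq
      have hec : DC.e i c1 = some c' := (adjC c1 c').mpr hfc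
      have hyne : y' ≠ 0 := by omega
      have hyc : HasStringLen (DC.f i) c1 (y' - 1) := by
        obtain ⟨y'', rfl⟩ : ∃ y'', y' = y'' + 1 := ⟨y' - 1, by omega⟩
        simpa using hsl_step hfc hy'
      rw [tensorGl_e_def, strLen_eq ha', strLen_eq hyc, if_pos (by omega : a' ≤ y' - 1)]
      simp [hec]
    · rw [if_neg hc] at h
      obtain ⟨b1, hfb, heq⟩ := Option.map_eq_some_iff.mp h
      obtain ⟨rfl, rfl⟩ : b1 = b ∧ c' = c := by simpa [Prod.ext_iff] using heq
      have heb : DB.e i b1 = some b' := (adjB b1 b').mpr hfb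
      have hab : HasStringLen (DB.e i) b1 (a' + 1) := (hsl_succ_iff _ _ _).mpr ⟨b', heb, ha'⟩
      rw [tensorGl_e_def, strLen_eq hab, strLen_eq hy', if_neg (by omega : ¬ a' + 1 ≤ y')]
      simp [heb]

end TensorGlAdj

section TensorBarLemmas

variable {B C : Type*}

lemma tensorQ_ebar_def (DB : SqQData B) (DC : SqQData C) (bc : B × C) :
    (tensorQ DB DC).ebar bc =
      if DB.wt bc.1 1 = 0 ∧ DB.wt bc.1 2 = 0 then (DC.ebar bc.2).map (fun c' => (bc.1, c'))
      else (DB.ebar bc.1).map (fun b' => (b', bc.2)) := rfl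

lemma tensorQ_fbar_def (DB : SqQData B) (DC : SqQData C) (bc : B × C) :
    (tensorQ DB DC).fbar bc =
      if DB.wt bc.1 1 = 0 ∧ DB.wt bc.1 2 = 0 then (DC.fbar bc.2).map (fun c' => (bc.1, c'))
      else (DB.fbar bc.1).map (fun b' => (b', bc.2)) := rfl

/-- String length transfers to the product when the operator acts on the right factor. -/
lemma hsl_bar_right (P : B → Prop) [DecidablePred P] (gB : B → Option B) (gC : C → Option C) :
    ∀ (m : ℕ) (b : B) (c : C), P b → HasStringLen gC c m →
      HasStringLen (fun bc : B × C =>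
        if P bc.1 then (gC bc.2).map (fun c' => (bc.1, c'))
        else (gB bc.1).map (fun b' => (b', bc.2))) (b, c) m := by
  intro m
  induction m with
  | zero =>
    intro b c hp h
    rw [hsl_zero_iff]
    simp [hp, (hsl_zero_iff _ _).mp h]
  | succ m ih =>
    intro b c hp h
    obtain ⟨c', hgc, h'⟩ := (hsl_succ_iff _ _ _).mp h
    rw [hsl_succ_iff]
    exact ⟨(b, c'), by simp [hp, hgc], ih b c' hp h'⟩

/-- String length transfers to the product when the operator acts on the left factor,
provided the governing predicate remains false along the orbit. -/
lemma hsl_bar_left (P : B → Prop) [DecidablePred P] (gB : B → Option B) (gC : C → Option C)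
    (hstab : ∀ b b', gB b = some b' → ¬ P b') :
    ∀ (m : ℕ) (b : B) (c : C), ¬ P b → HasStringLen gB b m →
      HasStringLen (fun bc : B × C =>
        if P bc.1 then (gC bc.2).map (fun c' => (bc.1, c'))
        else (gB bc.1).map (fun b' => (b', bc.2))) (b, c) m := by
  intro m
  induction m with
  | zero =>
    intro b c hp h
    rw [hsl_zero_iff]
    simp [hp, (hsl_zero_iff _ _).mp h]
  | succ m ih =>
    intro b c hp h
    obtain ⟨b', hgb, h'⟩ := (hsl_succ_iff _ _ _).mp h
    rw [hsl_succ_iff]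
    exact ⟨(b', c), by simp [hp, hgb], ih b' c (hstab b b' hgb) h'⟩

/-- Generic commutation of two "tensor-product style" partial operators. -/
lemma tensor_comm (P : B → Prop) [DecidablePred P] (cond : B → C → Prop)
    [∀ b c, Decidable (cond b c)]
    (XB YB : B → Option B) (XC YC : C → Option C)
    (hcommB : ∀ b, (XB b).bind YB = (YB b).bind XB)
    (hcommC : ∀ c, (XC c).bind YC = (YC c).bind XC)
    (hcondB : ∀ b b' c, YB b = some b' → (cond b c ↔ cond b' c))
    (hcondC : ∀ b c c', YC c = some c' → (cond b c ↔ cond b c'))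
    (hPX : ∀ b b', XB b = some b' → (P b ↔ P b')) (bc : B × C) :
    ((if cond bc.1 bc.2 then (XC bc.2).map (fun c' => (bc.1, c'))
        else (XB bc.1).map (fun b' => (b', bc.2))).bind
      (fun bc' => if P bc'.1 then (YC bc'.2).map (fun c' => (bc'.1, c'))
        else (YB bc'.1).map (fun b' => (b', bc'.2)))) =
    ((if P bc.1 then (YC bc.2).map (fun c' => (bc.1, c'))
        else (YB bc.1).map (fun b' => (b', bc.2))).bind
      (fun bc' => if cond bc'.1 bc'.2 then (XC bc'.2).map (fun c' => (bc'.1, c'))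
        else (XB bc'.1).map (fun b' => (b', bc'.2)))) := by
  obtain ⟨b, c⟩ := bc
  by_cases hc : cond b c <;> by_cases hp : P b
  · -- both act on the right factor
    rw [if_pos hc, if_pos hp]
    have L : ((XC c).map (fun c' => ((b, c).1, c'))).bind
        (fun bc' => if P bc'.1 then (YC bc'.2).map (fun c' => (bc'.1, c'))
          else (YB bc'.1).map (fun b' => (b', bc'.2))) =
        ((XC c).bind YC).map (fun c' => (b, c')) := by
      cases hxc : XC c with
      | none => rfl
      | some c1 => simp [hp]
    have R : ((YC c).map (fun c' => ((b, c).1, c'))).bind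
        (fun bc' => if cond bc'.1 bc'.2 then (XC bc'.2).map (fun c' => (bc'.1, c'))
          else (XB bc'.1).map (fun b' => (b', bc'.2))) =
        ((YC c).bind XC).map (fun c' => (b, c')) := by
      cases hyc : YC c with
      | none => rfl
      | some c2 => simp [(hcondC b c c2 hyc).mp hc]
    rw [L, R, hcommC]
  · -- X on the right factor, Y on the left factor
    rw [if_pos hc, if_neg hp]
    cases hxc : XC c with
    | none =>
      cases hyb : YB b with
      | none => simp
      | some b2 => simp [((hcondB b b2 c hyb).mp hc : cond b2 c), hxc]
    | some c1 =>
      cases hyb : YB b with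
      | none => simp [hp, hyb]
      | some b2 => simp [hp, hyb, ((hcondB b b2 c hyb).mp hc : cond b2 c), hxc]
  · -- X on the left factor, Y on the right factor
    rw [if_neg hc, if_pos hp]
    cases hxb : XB b with
    | none =>
      cases hyc : YC c with
      | none => simp
      | some c2 =>
        have h2 : ¬ cond b c2 := fun h => hc ((hcondC b c c2 hyc).mpr h)
        simp [h2, hxb]
    | some b1 =>
      cases hyc : YC c with
      | none => simp [(hPX b b1 hxb).mp hp, hyc]
      | some c2 =>
        have h2 : ¬ cond b c2 := fun h => hc ((hcondC b c c2 hyc).mpr h)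
        simp [(hPX b b1 hxb).mp hp, hyc, h2, hxb]
  · -- both act on the left factor
    rw [if_neg hc, if_neg hp]
    have L : ((XB b).map (fun b' => (b', (b, c).2))).bind
        (fun bc' => if P bc'.1 then (YC bc'.2).map (fun c' => (bc'.1, c'))
          else (YB bc'.1).map (fun b' => (b', bc'.2))) =
        ((XB b).bind YB).map (fun b' => (b', c)) := by
      cases hxb : XB b with
      | none => rfl
      | some b1 =>
        have h1 : ¬ P b1 := fun h => hp ((hPX b b1 hxb).mpr h)
        simp [h1]
    have R : ((YB b).map (fun b' => (b', (b, c).2))).bind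
        (fun bc' => if cond bc'.1 bc'.2 then (XC bc'.2).map (fun c' => (bc'.1, c'))
          else (XB bc'.1).map (fun b' => (b', bc'.2))) =
        ((YB b).bind XB).map (fun b' => (b', c)) := by
      cases hyb : YB b with
      | none => rfl
      | some b2 =>
        have h2 : ¬ cond b2 c := fun h => hc ((hcondB b b2 c hyb).mpr h)
        simp [h2]
    rw [L, R, hcommB]

end TensorBarLemmas

/-- Theorem 3.14 of the paper, `√q_n` part: the tensor product of
two `√q_n`-crystals, with the queer operators acting on the right factor exactly when
the first two weight coordinates of the left factor vanish, is again a `√q_n`-crystal. -/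
theorem stmt17 {B C : Type*} (n : ℕ) (DB : SqQData B) (DC : SqQData C)
    (hB : IsSqQnCrystal n DB) (hC : IsSqQnCrystal n DC) :
    IsSqQnCrystal n (tensorQ DB DC) := by
  obtain ⟨⟨hBlen, hBadj, hBwt⟩, hBcomm, hBtr, hBbl, hBba, hBbw⟩ := hB
  obtain ⟨⟨hClen, hCadj, hCwt⟩, hCcomm, hCtr, hCbl, hCba, hCbw⟩ := hC
  have hstabE : ∀ b0 b1 : B, DB.ebar b0 = some b1 →
      ¬ (DB.wt b1 1 = 0 ∧ DB.wt b1 2 = 0) := by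
    intro b0 b1 hg hcon
    have hf : DB.fbar b1 = some b0 := (hBba b0 b1).mp hg
    obtain ⟨ep, ph, hep, hph, hsum⟩ := hBbl b1
    rw [if_pos hcon] at hsum
    have hph0 : ph = 0 := by omega
    rw [hph0, hsl_zero_iff] at hph
    rw [hph] at hf
    exact Option.some_ne_none _ hf.symm
  have hstabF : ∀ b0 b1 : B, DB.fbar b0 = some b1 →
      ¬ (DB.wt b1 1 = 0 ∧ DB.wt b1 2 = 0) := by
    intro b0 b1 hg hcon
    have hf : DB.ebar b1 = some b0 := (hBba b1 b0).mpr hg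
    obtain ⟨ep, ph, hep, hph, hsum⟩ := hBbl b1
    rw [if_pos hcon] at hsum
    have hep0 : ep = 0 := by omega
    rw [hep0, hsl_zero_iff] at hep
    rw [hep] at hf
    exact Option.some_ne_none _ hf.symm
  have hEbarEq : (tensorQ DB DC).ebar = (fun bc : B × C =>
      if DB.wt bc.1 1 = 0 ∧ DB.wt bc.1 2 = 0 then (DC.ebar bc.2).map (fun c' => (bc.1, c'))
      else (DB.ebar bc.1).map (fun b' => (b', bc.2))) := funext fun bc => tensorQ_ebar_def DB DC bc
  have hFbarEq : (tensorQ DB DC).fbar = (fun bc : B × C =>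
      if DB.wt bc.1 1 = 0 ∧ DB.wt bc.1 2 = 0 then (DC.fbar bc.2).map (fun c' => (bc.1, c'))
      else (DB.fbar bc.1).map (fun b' => (b', bc.2))) := funext fun bc => tensorQ_fbar_def DB DC bc
  refine ⟨?_, ?_, ?_, ?_, ?_, ?_⟩
  · -- the √gl_n-crystal axioms
    show IsSqGlCrystal n (tensorGl DB.toSqGlData DC.toSqGlData)
    refine ⟨?_, ?_, ?_⟩
    · intro i h1 h2 bc
      obtain ⟨b, c⟩ := bc
      obtain ⟨a, A, ha, hA, hevB, hintB⟩ := hBlen i h1 h2 b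
      obtain ⟨x, y, hx, hy, hevC, hintC⟩ := hClen i h1 h2 c
      refine ⟨x + (a - y), A + (y - a),
        tensor_e_hsl _ _ i (hCadj i h1 h2) _ b c a x y ha hx hy rfl,
        tensor_f_hsl _ _ i (hBadj i h1 h2) _ b c a A y ha hA hy rfl, ?_, ?_⟩
      · rw [Nat.even_iff] at hevB hevC ⊢; omega
      · simp only [tensorGl_wt_def]
        rcases le_total a y with hle | hle
        · rw [Nat.sub_eq_zero_of_le hle]
          push_cast [Nat.cast_sub hle]
          linarith [hintB, hintC]
        · rw [Nat.sub_eq_zero_of_le hle]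
          push_cast [Nat.cast_sub hle]
          linarith [hintB, hintC]
    · intro i h1 h2
      exact tensor_adj _ _ i (hBadj i h1 h2) (hCadj i h1 h2)
        (fun b => (hBlen i h1 h2 b).imp fun ep h => h.imp fun ph hh => ⟨hh.1, hh.2.1⟩)
        (fun c => (hClen i h1 h2 c).imp fun ep h => h.imp fun ph hh => ⟨hh.1, hh.2.1⟩)
    · intro i h1 h2 bc bc' h ep hep k
      obtain ⟨b, c⟩ := bc
      obtain ⟨a, A, ha, hA, hevB, hintB⟩ := hBlen i h1 h2 b
      obtain ⟨x, y, hx, hy, hevC, hintC⟩ := hClen i h1 h2 c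
      have hM : HasStringLen ((tensorGl DB.toSqGlData DC.toSqGlData).e i) (b, c)
          (x + (a - y)) :=
        tensor_e_hsl _ _ i (hCadj i h1 h2) _ b c a x y ha hx hy rfl
      have hepv : ep = x + (a - y) := hsl_unique hep hM
      rw [tensorGl_e_def, strLen_eq ha, strLen_eq hy] at h
      by_cases hcnd : a ≤ y
      · rw [if_pos hcnd] at h
        obtain ⟨c1, hec, heq⟩ := Option.map_eq_some_iff.mp h
        obtain rfl : bc' = (b, c1) := heq.symm
        have hcomp := hCwt i h1 h2 c c1 hec x hx k
        have hex : Even ep ↔ Even x := by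
          rw [Nat.even_iff, Nat.even_iff]; omega
        by_cases hE : Even x
        · rw [if_pos (hex.mpr hE)]; rw [if_pos hE] at hcomp
          simp only [tensorGl_wt_def]; push_cast; linarith [hcomp]
        · rw [if_neg fun hh => hE (hex.mp hh)]; rw [if_neg hE] at hcomp
          simp only [tensorGl_wt_def]; push_cast; linarith [hcomp]
      · rw [if_neg hcnd] at h
        obtain ⟨b1, heb, heq⟩ := Option.map_eq_some_iff.mp h
        obtain rfl : bc' = (b1, c) := heq.symm
        have hcomp := hBwt i h1 h2 b b1 heb a ha k
        have hex : Even ep ↔ Even a := by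
          rw [Nat.even_iff, Nat.even_iff]; rw [Nat.even_iff] at hevC; omega
        by_cases hE : Even a
        · rw [if_pos (hex.mpr hE)]; rw [if_pos hE] at hcomp
          simp only [tensorGl_wt_def]; push_cast; linarith [hcomp]
        · rw [if_neg fun hh => hE (hex.mp hh)]; rw [if_neg hE] at hcomp
          simp only [tensorGl_wt_def]; push_cast; linarith [hcomp]
  · -- commutation of bar operators with e_i, f_i for i ≥ 3
    intro i h3 h2 bc
    have h1 : 1 ≤ i := by omega
    have hslBpres : ∀ b b' : B, (DB.ebar b = some b' ∨ DB.fbar b = some b') →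
        strLen (DB.e i) b' = strLen (DB.e i) b ∧
        strLen (DB.f i) b' = strLen (DB.f i) b := by
      intro b b' hor
      obtain ⟨a, A, ha, hA, -, -⟩ := hBlen i h1 h2 b
      have h' := hBtr i h3 h2 b b' hor
      exact ⟨by rw [strLen_eq ((h'.1 a).mp ha), strLen_eq ha],
        by rw [strLen_eq ((h'.2 A).mp hA), strLen_eq hA]⟩
    have hslCpres : ∀ c c' : C, (DC.ebar c = some c' ∨ DC.fbar c = some c') →
        strLen (DC.e i) c' = strLen (DC.e i) c ∧
        strLen (DC.f i) c' = strLen (DC.f i) c := by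
      intro c c' hor
      obtain ⟨x, y, hx, hy, -, -⟩ := hClen i h1 h2 c
      have h' := hCtr i h3 h2 c c' hor
      exact ⟨by rw [strLen_eq ((h'.1 x).mp hx), strLen_eq hx],
        by rw [strLen_eq ((h'.2 y).mp hy), strLen_eq hy]⟩
    have keyB : ∀ u v : B, DB.e i u = some v →
        DB.wt v 1 = DB.wt u 1 ∧ DB.wt v 2 = DB.wt u 2 := by
      intro u v huv
      obtain ⟨a, A, ha, -, -, -⟩ := hBlen i h1 h2 u
      have w1 := hBwt i h1 h2 u v huv a ha 1
      have w2 := hBwt i h1 h2 u v huv a ha 2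
      simp only [show (1 : ℕ) ≠ i from by omega, show (1 : ℕ) ≠ i + 1 from by omega,
        if_false, ite_self] at w1
      simp only [show (2 : ℕ) ≠ i from by omega, show (2 : ℕ) ≠ i + 1 from by omega,
        if_false, ite_self] at w2
      omega
    have hwtB : ∀ b b' : B, (DB.e i b = some b' ∨ DB.f i b = some b') →
        ((DB.wt b 1 = 0 ∧ DB.wt b 2 = 0) ↔ (DB.wt b' 1 = 0 ∧ DB.wt b' 2 = 0)) := by
      intro b b' hor
      rcases hor with hor | hor
      · have := keyB b b' hor
        constructor <;> (rintro ⟨u, v⟩; exact ⟨by omega, by omega⟩)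
      · have := keyB b' b ((hBadj i h1 h2 b' b).mpr hor)
        constructor <;> (rintro ⟨u, v⟩; exact ⟨by omega, by omega⟩)
    refine ⟨?_, ?_, ?_, ?_⟩
    · exact tensor_comm (fun b => DB.wt b 1 = 0 ∧ DB.wt b 2 = 0)
        (fun b c => strLen (DB.e i) b ≤ strLen (DC.f i) c)
        (DB.e i) DB.ebar (DC.e i) DC.ebar
        (fun b => (hBcomm i h3 h2 b).1) (fun c => (hCcomm i h3 h2 c).1)
        (fun b b' c hy => by
          show strLen (DB.e i) b ≤ strLen (DC.f i) c ↔
            strLen (DB.e i) b' ≤ strLen (DC.f i) c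
          rw [(hslBpres b b' (Or.inl hy)).1])
        (fun b c c' hy => by
          show strLen (DB.e i) b ≤ strLen (DC.f i) c ↔
            strLen (DB.e i) b ≤ strLen (DC.f i) c'
          rw [(hslCpres c c' (Or.inl hy)).2])
        (fun b b' hx => hwtB b b' (Or.inl hx)) bc
    · exact tensor_comm (fun b => DB.wt b 1 = 0 ∧ DB.wt b 2 = 0)
        (fun b c => strLen (DB.e i) b < strLen (DC.f i) c)
        (DB.f i) DB.ebar (DC.f i) DC.ebar
        (fun b => (hBcomm i h3 h2 b).2.1) (fun c => (hCcomm i h3 h2 c).2.1)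
        (fun b b' c hy => by
          show strLen (DB.e i) b < strLen (DC.f i) c ↔
            strLen (DB.e i) b' < strLen (DC.f i) c
          rw [(hslBpres b b' (Or.inl hy)).1])
        (fun b c c' hy => by
          show strLen (DB.e i) b < strLen (DC.f i) c ↔
            strLen (DB.e i) b < strLen (DC.f i) c'
          rw [(hslCpres c c' (Or.inl hy)).2])
        (fun b b' hx => hwtB b b' (Or.inr hx)) bc
    · exact tensor_comm (fun b => DB.wt b 1 = 0 ∧ DB.wt b 2 = 0)
        (fun b c => strLen (DB.e i) b ≤ strLen (DC.f i) c)
        (DB.e i) DB.fbar (DC.e i) DC.fbar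
        (fun b => (hBcomm i h3 h2 b).2.2.1) (fun c => (hCcomm i h3 h2 c).2.2.1)
        (fun b b' c hy => by
          show strLen (DB.e i) b ≤ strLen (DC.f i) c ↔
            strLen (DB.e i) b' ≤ strLen (DC.f i) c
          rw [(hslBpres b b' (Or.inr hy)).1])
        (fun b c c' hy => by
          show strLen (DB.e i) b ≤ strLen (DC.f i) c ↔
            strLen (DB.e i) b ≤ strLen (DC.f i) c'
          rw [(hslCpres c c' (Or.inr hy)).2])
        (fun b b' hx => hwtB b b' (Or.inl hx)) bc
    · exact tensor_comm (fun b => DB.wt b 1 = 0 ∧ DB.wt b 2 = 0)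
        (fun b c => strLen (DB.e i) b < strLen (DC.f i) c)
        (DB.f i) DB.fbar (DC.f i) DC.fbar
        (fun b => (hBcomm i h3 h2 b).2.2.2) (fun c => (hCcomm i h3 h2 c).2.2.2)
        (fun b b' c hy => by
          show strLen (DB.e i) b < strLen (DC.f i) c ↔
            strLen (DB.e i) b' < strLen (DC.f i) c
          rw [(hslBpres b b' (Or.inr hy)).1])
        (fun b c c' hy => by
          show strLen (DB.e i) b < strLen (DC.f i) c ↔
            strLen (DB.e i) b < strLen (DC.f i) c'
          rw [(hslCpres c c' (Or.inr hy)).2])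
        (fun b b' hx => hwtB b b' (Or.inr hx)) bc
  · -- bar operators preserve string lengths of e_i, f_i for i ≥ 3
    intro i h3 h2 bc bc' hor
    have h1 : 1 ≤ i := by omega
    obtain ⟨b, c⟩ := bc
    obtain ⟨a, A, ha, hA, -, -⟩ := hBlen i h1 h2 b
    obtain ⟨x, y, hx, hy, -, -⟩ := hClen i h1 h2 c
    have tEval : ∀ (b : B) (c : C) (a x y : ℕ), HasStringLen (DB.e i) b a →
        HasStringLen (DC.e i) c x → HasStringLen (DC.f i) c y → ∀ m,
        (HasStringLen ((tensorQ DB DC).e i) (b, c) m ↔ m = x + (a - y)) := by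
      intro b c a x y ha hx hy m
      have H : HasStringLen ((tensorGl DB.toSqGlData DC.toSqGlData).e i) (b, c)
          (x + (a - y)) := tensor_e_hsl _ _ i (hCadj i h1 h2) _ b c a x y ha hx hy rfl
      exact ⟨fun h => hsl_unique h H, fun h => h ▸ H⟩
    have tFval : ∀ (b : B) (c : C) (a A y : ℕ), HasStringLen (DB.e i) b a →
        HasStringLen (DB.f i) b A → HasStringLen (DC.f i) c y → ∀ m,
        (HasStringLen ((tensorQ DB DC).f i) (b, c) m ↔ m = A + (y - a)) := by
      intro b c a A y ha hA hy m
      have H : HasStringLen ((tensorGl DB.toSqGlData DC.toSqGlData).f i) (b, c)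
          (A + (y - a)) := tensor_f_hsl _ _ i (hBadj i h1 h2) _ b c a A y ha hA hy rfl
      exact ⟨fun h => hsl_unique h H, fun h => h ▸ H⟩
    rcases hor with hbar | hbar
    · rw [tensorQ_ebar_def] at hbar
      by_cases hp : DB.wt b 1 = 0 ∧ DB.wt b 2 = 0
      · rw [if_pos hp] at hbar
        obtain ⟨c1, hg, heq⟩ := Option.map_eq_some_iff.mp hbar
        obtain rfl : bc' = (b, c1) := heq.symm
        have htr := hCtr i h3 h2 c c1 (Or.inl hg)
        have hx1 := (htr.1 x).mp hx
        have hy1 := (htr.2 y).mp hy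
        exact ⟨fun m => by
            rw [tEval b c a x y ha hx hy m, tEval b c1 a x y ha hx1 hy1 m],
          fun m => by
            rw [tFval b c a A y ha hA hy m, tFval b c1 a A y ha hA hy1 m]⟩
      · rw [if_neg hp] at hbar
        obtain ⟨b1, hg, heq⟩ := Option.map_eq_some_iff.mp hbar
        obtain rfl : bc' = (b1, c) := heq.symm
        have htr := hBtr i h3 h2 b b1 (Or.inl hg)
        have ha1 := (htr.1 a).mp ha
        have hA1 := (htr.2 A).mp hA
        exact ⟨fun m => by
            rw [tEval b c a x y ha hx hy m, tEval b1 c a x y ha1 hx hy m],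
          fun m => by
            rw [tFval b c a A y ha hA hy m, tFval b1 c a A y ha1 hA1 hy m]⟩
    · rw [tensorQ_fbar_def] at hbar
      by_cases hp : DB.wt b 1 = 0 ∧ DB.wt b 2 = 0
      · rw [if_pos hp] at hbar
        obtain ⟨c1, hg, heq⟩ := Option.map_eq_some_iff.mp hbar
        obtain rfl : bc' = (b, c1) := heq.symm
        have htr := hCtr i h3 h2 c c1 (Or.inr hg)
        have hx1 := (htr.1 x).mp hx
        have hy1 := (htr.2 y).mp hy
        exact ⟨fun m => by
            rw [tEval b c a x y ha hx hy m, tEval b c1 a x y ha hx1 hy1 m],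
          fun m => by
            rw [tFval b c a A y ha hA hy m, tFval b c1 a A y ha hA hy1 m]⟩
      · rw [if_neg hp] at hbar
        obtain ⟨b1, hg, heq⟩ := Option.map_eq_some_iff.mp hbar
        obtain rfl : bc' = (b1, c) := heq.symm
        have htr := hBtr i h3 h2 b b1 (Or.inr hg)
        have ha1 := (htr.1 a).mp ha
        have hA1 := (htr.2 A).mp hA
        exact ⟨fun m => by
            rw [tEval b c a x y ha hx hy m, tEval b1 c a x y ha1 hx hy m],
          fun m => by
            rw [tFval b c a A y ha hA hy m, tFval b1 c a A y ha1 hA1 hy m]⟩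
  · -- bar string lengths
    intro bc
    obtain ⟨b, c⟩ := bc
    by_cases hp : DB.wt b 1 = 0 ∧ DB.wt b 2 = 0
    · obtain ⟨ep, ph, hep, hph, hsum⟩ := hCbl c
      refine ⟨ep, ph, ?_, ?_, ?_⟩
      · rw [hEbarEq]
        exact hsl_bar_right (fun b => DB.wt b 1 = 0 ∧ DB.wt b 2 = 0) DB.ebar DC.ebar ep b c hp hep
      · rw [hFbarEq]
        exact hsl_bar_right (fun b => DB.wt b 1 = 0 ∧ DB.wt b 2 = 0) DB.fbar DC.fbar ph b c hp hph
      have e1 : (tensorQ DB DC).wt (b, c) 1 = DB.wt b 1 + DC.wt c 1 := rfl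
      have e2 : (tensorQ DB DC).wt (b, c) 2 = DB.wt b 2 + DC.wt c 2 := rfl
      rw [hsum]
      by_cases hcc : DC.wt c 1 = 0 ∧ DC.wt c 2 = 0
      · rw [if_pos hcc, if_pos (by rw [e1, e2, hp.1, hp.2]; simpa using hcc)]
      · rw [if_neg hcc, if_neg (by rw [e1, e2, hp.1, hp.2]; simpa using hcc)]
    · obtain ⟨ep, ph, hep, hph, hsum⟩ := hBbl b
      rw [if_neg hp] at hsum
      refine ⟨ep, ph, ?_, ?_, ?_⟩
      · rw [hEbarEq]
        exact hsl_bar_left (fun b => DB.wt b 1 = 0 ∧ DB.wt b 2 = 0) DB.ebar DC.ebar hstabE ep b c hp hep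
      · rw [hFbarEq]
        exact hsl_bar_left (fun b => DB.wt b 1 = 0 ∧ DB.wt b 2 = 0) DB.fbar DC.fbar hstabF ph b c hp hph
      have hcond : ¬ ((tensorQ DB DC).wt (b, c) 1 = 0 ∧ (tensorQ DB DC).wt (b, c) 2 = 0) := by
        rintro ⟨u, v⟩
        have u' : DB.wt b 1 + DC.wt c 1 = 0 := u
        have v' : DB.wt b 2 + DC.wt c 2 = 0 := v
        exact hp ⟨by omega, by omega⟩
      rw [if_neg hcond]; exact hsum
  · -- bar adjointness
    rintro ⟨b, c⟩ ⟨b', c'⟩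
    constructor
    · intro h
      rw [tensorQ_ebar_def] at h
      by_cases hp : DB.wt b 1 = 0 ∧ DB.wt b 2 = 0
      · rw [if_pos hp] at h
        obtain ⟨c1, hg, heq⟩ := Option.map_eq_some_iff.mp h
        obtain ⟨rfl, rfl⟩ : b = b' ∧ c1 = c' := by simpa [Prod.ext_iff] using heq
        have hf : DC.fbar c1 = some c := (hCba c c1).mp hg
        rw [tensorQ_fbar_def, if_pos hp]
        simp [hf]
      · rw [if_neg hp] at h
        obtain ⟨b1, hg, heq⟩ := Option.map_eq_some_iff.mp h
        obtain ⟨rfl, rfl⟩ : b1 = b' ∧ c = c' := by simpa [Prod.ext_iff] using heq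
        have hf : DB.fbar b1 = some b := (hBba b b1).mp hg
        rw [tensorQ_fbar_def, if_neg (hstabE b b1 hg)]
        simp [hf]
    · intro h
      rw [tensorQ_fbar_def] at h
      by_cases hp : DB.wt b' 1 = 0 ∧ DB.wt b' 2 = 0
      · rw [if_pos hp] at h
        obtain ⟨c1, hg, heq⟩ := Option.map_eq_some_iff.mp h
        obtain ⟨rfl, rfl⟩ : b' = b ∧ c1 = c := by simpa [Prod.ext_iff] using heq
        have he : DC.ebar c1 = some c' := (hCba c1 c').mpr hg
        rw [tensorQ_ebar_def, if_pos hp]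
        simp [he]
      · rw [if_neg hp] at h
        obtain ⟨b1, hg, heq⟩ := Option.map_eq_some_iff.mp h
        obtain ⟨rfl, rfl⟩ : b1 = b ∧ c' = c := by simpa [Prod.ext_iff] using heq
        have he : DB.ebar b1 = some b' := (hBba b1 b').mpr hg
        rw [tensorQ_ebar_def, if_neg (hstabF b' b1 hg)]
        simp [he]
  · -- bar weight rule
    rintro ⟨b, c⟩ bc' h ep hep k
    rw [tensorQ_ebar_def] at h
    by_cases hp : DB.wt b 1 = 0 ∧ DB.wt b 2 = 0
    · rw [if_pos hp] at h
      obtain ⟨c1, hg, heq⟩ := Option.map_eq_some_iff.mp h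
      obtain rfl : bc' = (b, c1) := heq.symm
      obtain ⟨epc, phc, hepc, hphc, -⟩ := hCbl c
      rw [hEbarEq] at hep
      have hT := hsl_bar_right (fun b => DB.wt b 1 = 0 ∧ DB.wt b 2 = 0) DB.ebar DC.ebar epc b c hp hepc
      have hepv : ep = epc := hsl_unique hep hT
      have hcomp := hCbw c c1 hg epc hepc k
      have e1 : ∀ u : C, (tensorQ DB DC).wt (b, u) k = DB.wt b k + DC.wt u k := fun u => rfl
      rw [hepv]
      have g1 : ((tensorQ DB DC).wt ((b, c).1, c1) k : ℤ) - (tensorQ DB DC).wt (b, c) k =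
          (DC.wt c1 k : ℤ) - DC.wt c k := by
        rw [e1 c1, e1 c]; push_cast; ring
      rw [g1, hcomp]
    · rw [if_neg hp] at h
      obtain ⟨b1, hg, heq⟩ := Option.map_eq_some_iff.mp h
      obtain rfl : bc' = (b1, c) := heq.symm
      obtain ⟨epb, phb, hepb, hphb, -⟩ := hBbl b
      rw [hEbarEq] at hep
      have hT := hsl_bar_left (fun b => DB.wt b 1 = 0 ∧ DB.wt b 2 = 0) DB.ebar DC.ebar hstabE epb b c hp hepb
      have hepv : ep = epb := hsl_unique hep hT
      have hcomp := hBbw b b1 hg epb hepb k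
      have e1 : ∀ u : B, (tensorQ DB DC).wt (u, c) k = DB.wt u k + DC.wt c k := fun u => rfl
      rw [hepv]
      have g1 : ((tensorQ DB DC).wt (b1, (b, c).2) k : ℤ) - (tensorQ DB DC).wt (b, c) k =
          (DB.wt b1 k : ℤ) - DB.wt b k := by
        rw [e1 b1, e1 b]; push_cast; ring
      rw [g1, hcomp]
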